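/- In a chart with a LLEE-witness, two vertices u and v are in the same strongly connected component if and only if there exists a vertex w such that u ⇢* w and v ⇢* w, where ⇢ is the loops-back-to relation. -/

import Mathlib

/-- An entry/body-labeled finite chart: a rooted labelled transition system with
termination sink `tick` (√), start vertex `start`, and transitions carrying an
action from `A` together with a marking label in ℕ (label `0` marks body
transitions, positive labels mark entry transitions).  Every vertex other than
possibly `tick` is reachable from the start vertex. -/
structure LChart (V : Type) (A : Type) : Type where
  tick : V
  start : V
  Tr : V → A → ℕ → V → Prop
  tick_no_out : ∀ (a : A) (n : ℕ) (w : V), ¬ Tr tick a n w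
  start_ne_tick : start ≠ tick
  connected : ∀ v : V, v = tick ∨
    Relation.ReflTransGen (fun x y => ∃ (a : A) (n : ℕ), Tr x a n y) start v

namespace LChart

variable {V A : Type}

/-- Body transition step (marking label `0`). -/
def BStep (C : LChart V A) (x y : V) : Prop := ∃ a : A, C.Tr x a 0 y

/-- Entry transition step of level `α > 0`. -/
def EStep (C : LChart V A) (α : ℕ) (x y : V) : Prop := 0 < α ∧ ∃ a : A, C.Tr x a α y

/-- A transition step of any kind. -/
def AnyStep (C : LChart V A) (x y : V) : Prop := ∃ (a : A) (n : ℕ), C.Tr x a n y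

/-- There is an entry transition of level `α` departing from `v`. -/
def HasEntry (C : LChart V A) (v : V) (α : ℕ) : Prop :=
  0 < α ∧ ∃ (a : A) (w : V), C.Tr v a α w

/-- `v` descends in a loop of level `α` to `w`: there is a path from `v` to `w`
starting with an `α`-entry transition and continuing with body transitions, in
which all transition targets avoid `v`. -/
def Descends (C : LChart V A) (v : V) (α : ℕ) (w : V) : Prop :=
  ∃ u : V, C.EStep α v u ∧ u ≠ v ∧
    Relation.ReflTransGen (fun x y => C.BStep x y ∧ y ≠ v) u w

/-- `v` descends in a loop to `w` (at some level). -/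
def Desc (C : LChart V A) (v w : V) : Prop := ∃ α : ℕ, C.Descends v α w

/-- An infinite path from `v` in the loop subchart `C[v,α]`: it starts at `v`,
takes an `α`-entry transition whenever it is at `v`, and body transitions
otherwise. -/
def LoopSeq (C : LChart V A) (v : V) (α : ℕ) (f : ℕ → V) : Prop :=
  f 0 = v ∧ ∀ n : ℕ,
    (f n = v → C.EStep α (f n) (f (n + 1))) ∧ (f n ≠ v → C.BStep (f n) (f (n + 1)))

/-- The conditions (W1), (W2)(a) (the subchart `C[v,α]` is a loop chart, i.e.
(L1) an infinite path from `v` exists, (L2) every infinite path from `v`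
returns to `v` after a positive number of steps, (L3) √ is not a vertex of
`C[v,α]`), and (W2)(b) (layeredness) for an entry/body-labeling to be a
LLEE-witness. -/
structure IsLLEE (C : LChart V A) : Prop where
  w1 : ¬ ∃ f : ℕ → V, f 0 = C.start ∧ ∀ n : ℕ, C.BStep (f n) (f (n + 1))
  w2a_L1 : ∀ (v : V) (α : ℕ), C.HasEntry v α → ∃ f : ℕ → V, C.LoopSeq v α f
  w2a_L2 : ∀ (v : V) (α : ℕ), C.HasEntry v α →
    ∀ f : ℕ → V, C.LoopSeq v α f → ∃ n : ℕ, 0 < n ∧ f n = v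
  w2a_L3 : ∀ (v : V) (α : ℕ), ¬ C.Descends v α C.tick
  w2b : ∀ (v w : V) (α : ℕ), C.Descends v α w → ∀ β : ℕ, α ≤ β → ¬ C.HasEntry w β

/-- `u` and `v` lie in the same strongly connected component. -/
def SameSCC (C : LChart V A) (u v : V) : Prop :=
  Relation.ReflTransGen C.AnyStep u v ∧ Relation.ReflTransGen C.AnyStep v u

/-- `w` loops back to `v`: `v` descends in a loop to `w` and there is a nonempty
path of body transitions from `w` back to `v`. -/
def LoopsBack (C : LChart V A) (w v : V) : Prop :=
  C.Desc v w ∧ Relation.TransGen C.BStep w v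

/-- `w` directly loops back to `v`. -/
def DLoopsBack (C : LChart V A) (w v : V) : Prop :=
  C.LoopsBack w v ∧ ∀ u : V, C.LoopsBack w u → u = v ∨ C.LoopsBack v u

end LChart


namespace LChartAux

variable {V : Type}


/-- Paths of a given length in a relation. -/
inductive PathN (r : V → V → Prop) : ℕ → V → V → Prop
  | refl (x : V) : PathN r 0 x x
  | step {x y z : V} {n : ℕ} : r x y → PathN r n y z → PathN r (n + 1) x z

theorem PathN.mono {r s : V → V → Prop} (hrs : ∀ a b, r a b → s a b) :
    ∀ {n p q}, PathN r n p q → PathN s n p q := by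
  intro n p q h
  induction h with
  | refl x => exact .refl x
  | step h₁ _ ih => exact .step (hrs _ _ h₁) ih

theorem pathN_of_rtg {r : V → V → Prop} {p q : V} (h : Relation.ReflTransGen r p q) :
    ∃ n, PathN r n p q := by
  induction h using Relation.ReflTransGen.head_induction_on with
  | refl => exact ⟨0, .refl _⟩
  | head h₁ _ ih => obtain ⟨n, hn⟩ := ih; exact ⟨n + 1, .step h₁ hn⟩

theorem PathN.rtg {r : V → V → Prop} {n p q} (h : PathN r n p q) :
    Relation.ReflTransGen r p q := by
  induction h with
  | refl x => exact .refl
  | step h₁ _ ih => exact .head h₁ ih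

theorem PathN.concat {r : V → V → Prop} {m n p q t} (h₁ : PathN r m p q)
    (h₂ : PathN r n q t) : PathN r (m + n) p t := by
  induction h₁ with
  | refl x => simpa using h₂
  | step hs _ ih => rw [Nat.add_right_comm]; exact .step hs (ih h₂)

theorem PathN.split {r : V → V → Prop} {n p q} (h : PathN r n p q) (z : V) :
    PathN (fun a b => r a b ∧ b ≠ z) n p q ∨ ∃ m, m < n ∧ PathN r m z q := by
  induction h with
  | refl x => exact Or.inl (.refl x)
  | @step x y w n h₁ h₂ ih =>
    by_cases hy : y = z
    · exact Or.inr ⟨n, Nat.lt_succ_self n, hy ▸ h₂⟩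
    · rcases ih with hl | ⟨m, hm, hp⟩
      · exact Or.inl (.step ⟨h₁, hy⟩ hl)
      · exact Or.inr ⟨m, hm.trans (Nat.lt_succ_self n), hp⟩

theorem PathN.firstHit {r : V → V → Prop} {n p q} (h : PathN r n p q) (hpq : p ≠ q) :
    ∃ m w, m < n ∧ PathN (fun a b => r a b ∧ b ≠ q) m p w ∧ r w q := by
  induction h with
  | refl x => exact absurd rfl hpq
  | @step x y w n h₁ h₂ ih =>
    by_cases hy : y = w
    · exact ⟨0, x, Nat.succ_pos n, .refl x, hy ▸ h₁⟩
    · obtain ⟨m, w', hm, hp, hr⟩ := ih hy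
      exact ⟨m + 1, w', Nat.succ_lt_succ hm, .step ⟨h₁, hy⟩ hp, hr⟩

theorem PathN.avoidLast {r : V → V → Prop} {n p q} (h : PathN r n p q) (z : V) (hqz : q ≠ z) :
    (∃ m, m ≤ n ∧ PathN (fun a b => r a b ∧ b ≠ z) m p q) ∨
    (∃ m, m < n ∧ PathN (fun a b => r a b ∧ b ≠ z) m z q) := by
  induction h with
  | refl x => exact Or.inl ⟨0, le_refl 0, .refl x⟩
  | @step x y w n h₁ h₂ ih =>
    rcases ih hqz with ⟨m, hm, hp⟩ | ⟨m, hm, hp⟩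
    · by_cases hy : y = z
      · exact Or.inr ⟨m, Nat.lt_succ_of_le hm, hy ▸ hp⟩
      · exact Or.inl ⟨m + 1, Nat.succ_le_succ hm, .step ⟨h₁, hy⟩ hp⟩
    · exact Or.inr ⟨m, hm.trans (Nat.lt_succ_self n), hp⟩

theorem PathN.lastE {r s : V → V → Prop} {n p q} (h : PathN (fun a b => r a b ∨ s a b) n p q) :
    PathN r n p q ∨ ∃ k m d d', k + 1 + m = n ∧
      PathN (fun a b => r a b ∨ s a b) k p d ∧ s d d' ∧ PathN r m d' q := by
  induction h with
  | refl x => exact Or.inl (.refl x)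
  | @step x y w n h₁ h₂ ih =>
    rcases ih with hl | ⟨k, m, d, d', hkm, hp1, hs, hp2⟩
    · rcases h₁ with hr | hs
      · exact Or.inl (.step hr hl)
      · exact Or.inr ⟨0, n, x, y, by omega, .refl x, hs, hl⟩
    · exact Or.inr ⟨k + 1, m, d, d', by omega, .step h₁ hp1, hs, hp2⟩

theorem PathN.end_ne {r : V → V → Prop} {z : V} {n p q}
    (h : PathN (fun a b => r a b ∧ b ≠ z) n p q) (hp : p ≠ z) : q ≠ z := by
  induction h with
  | refl x => exact hp
  | step h₁ h₂ ih => exact ih h₁.2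


end LChartAux

namespace LChartAux

open LChart

variable {V A : Type} {C : LChart V A}

theorem anyStep_cases {x y : V} (h : C.AnyStep x y) :
    C.BStep x y ∨ ∃ δ, C.EStep δ x y := by
  obtain ⟨a, n, h⟩ := h
  rcases Nat.eq_zero_or_pos n with hn | hn
  · exact Or.inl ⟨a, hn ▸ h⟩
  · exact Or.inr ⟨n, hn, a, h⟩

theorem bstep_any {x y : V} (h : C.BStep x y) : C.AnyStep x y := by
  obtain ⟨a, h⟩ := h; exact ⟨a, 0, h⟩

theorem estep_any {δ : ℕ} {x y : V} (h : C.EStep δ x y) : C.AnyStep x y := by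
  obtain ⟨h0, a, h⟩ := h; exact ⟨a, δ, h⟩

theorem estep_hasEntry {δ : ℕ} {x y : V} (h : C.EStep δ x y) : C.HasEntry x δ :=
  ⟨h.1, h.2.choose, y, h.2.choose_spec⟩

theorem descends_hasEntry {v z : V} {α : ℕ} (h : C.Descends v α z) : C.HasEntry v α :=
  estep_hasEntry h.choose_spec.1

theorem descends_ne {v z : V} {α : ℕ} (h : C.Descends v α z) : z ≠ v := by
  obtain ⟨u, _, hu, hp⟩ := h
  induction hp with
  | refl => exact hu
  | tail _ h2 _ => exact h2.2

theorem descends_append {v z y : V} {α : ℕ} (h : C.Descends v α z)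
    (hr : Relation.ReflTransGen (fun a b => C.BStep a b ∧ b ≠ v) z y) : C.Descends v α y := by
  obtain ⟨u, h1, h2, h3⟩ := h
  exact ⟨u, h1, h2, h3.trans hr⟩

theorem descends_appendB {v z y : V} {α : ℕ} (h : C.Descends v α z)
    (hb : C.BStep z y) (hy : y ≠ v) : C.Descends v α y :=
  descends_append h (Relation.ReflTransGen.single ⟨hb, hy⟩)

theorem descends_rtgAny {v z : V} {α : ℕ} (h : C.Descends v α z) :
    Relation.ReflTransGen C.AnyStep v z := by
  obtain ⟨u, h1, _, h3⟩ := h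
  exact Relation.ReflTransGen.head (estep_any h1)
    (Relation.ReflTransGen.mono (fun a b hab => bstep_any hab.1) _ _ h3)

theorem w2b_lt (hC : C.IsLLEE) {v z : V} {α δ : ℕ} (h : C.Descends v α z)
    (he : C.HasEntry z δ) : δ < α := by
  by_contra hge
  exact hC.w2b v z α h δ (by omega) he

/-- No infinite body path from any reachable vertex. -/
theorem nib_aux (hC : C.IsLLEE) {v : V}
    (hr : Relation.ReflTransGen C.AnyStep C.start v) :
    ¬ ∃ f : ℕ → V, f 0 = v ∧ ∀ n : ℕ, C.BStep (f n) (f (n + 1)) := by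
  induction hr with
  | refl => exact hC.w1
  | @tail p v hsp hpv ih =>
    rintro ⟨f, hf0, hf⟩
    rcases anyStep_cases hpv with hb | ⟨δ, he⟩
    · refine ih ⟨fun n => Nat.casesOn n p f, rfl, fun n => ?_⟩
      cases n with
      | zero => simpa [hf0] using hb
      | succ k => exact hf k
    · by_cases hp : ∃ k, f k = p
      · obtain ⟨k, hk⟩ := hp
        exact ih ⟨fun n => f (k + n), hk, fun n => hf (k + n)⟩
      · push_neg at hp
        have hLS : C.LoopSeq p δ (fun n => Nat.casesOn n p f) := by
          refine ⟨rfl, fun n => ?_⟩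
          cases n with
          | zero => exact ⟨fun _ => by simpa [hf0] using he, fun hne => absurd rfl hne⟩
          | succ k => exact ⟨fun hfk => absurd hfk (hp k), fun _ => hf k⟩
        obtain ⟨n, hn0, hnp⟩ := hC.w2a_L2 p δ (estep_hasEntry he) _ hLS
        obtain ⟨m, rfl⟩ := Nat.exists_eq_succ_of_ne_zero (Nat.pos_iff_ne_zero.mp hn0)
        exact hp m hnp

theorem nib (hC : C.IsLLEE) (v : V) :
    ¬ ∃ f : ℕ → V, f 0 = v ∧ ∀ n : ℕ, C.BStep (f n) (f (n + 1)) := by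
  rcases C.connected v with hv | hv
  · rintro ⟨f, hf0, hf⟩
    obtain ⟨a, ha⟩ := hf 0
    rw [hf0, hv] at ha
    exact C.tick_no_out a 0 (f 1) ha
  · exact nib_aux hC hv

/-- No body cycles. -/
theorem no_bcycle (hC : C.IsLLEE) {z : V} (h : Relation.TransGen C.BStep z z) : False := by
  have key : ∀ x : V, Relation.ReflTransGen C.BStep x z →
      ∃ y, C.BStep x y ∧ Relation.ReflTransGen C.BStep y z := by
    intro x hx
    rcases Relation.ReflTransGen.cases_head hx with rfl | ⟨y, h1, h2⟩
    · rcases Relation.TransGen.head'_iff.mp h with ⟨y, h1, h2⟩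
      exact ⟨y, h1, h2⟩
    · exact ⟨y, h1, h2⟩
  choose nxt h1 h2 using key
  let g : ℕ → {x : V // Relation.ReflTransGen C.BStep x z} := fun n =>
    Nat.rec ⟨z, Relation.ReflTransGen.refl⟩ (fun _ x => ⟨nxt x.1 x.2, h2 x.1 x.2⟩) n
  exact nib hC z ⟨fun n => (g n).1, rfl, fun n => h1 (g n).1 (g n).2⟩

theorem nopass (hC : C.IsLLEE) :
    ∀ δ n (R : V → V → Prop) (z y v' : V),
      (∀ p q, R p q → C.AnyStep p q ∧ q ≠ z) → C.Descends z δ y → PathN R n y v' →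
      ∀ γ, δ ≤ γ → C.HasEntry v' γ → False := by
  intro δ
  induction δ using Nat.strong_induction_on with
  | _ δ ihδ =>
    intro n
    induction n using Nat.strong_induction_on with
    | _ n ihn =>
      intro R z y v' hR hD hP γ hγ hE
      cases hP with
      | refl => exact hC.w2b z y δ hD γ hγ hE
      | @step _ y₁ _ n' hstep hrest =>
        obtain ⟨hany, hy₁z⟩ := hR _ _ hstep
        rcases anyStep_cases hany with hb | ⟨ε, he⟩
        · exact ihn n' (Nat.lt_succ_self n') R z y₁ v' hR
            (descends_appendB hD hb hy₁z) hrest γ hγ hE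
        · have hεδ : ε < δ := w2b_lt hC hD (estep_hasEntry he)
          by_cases hyy : y₁ = y
          · exact ihn n' (Nat.lt_succ_self n') R z y v' hR hD (hyy ▸ hrest) γ hγ hE
          · rcases PathN.split hrest y with hl | ⟨m, hm, hp⟩
            · exact ihδ ε hεδ n' (fun a b => R a b ∧ b ≠ y) y y₁ v'
                (fun p q hpq => ⟨(hR p q hpq.1).1, hpq.2⟩)
                ⟨y₁, he, hyy, Relation.ReflTransGen.refl⟩ hl γ (by omega) hE
            · exact ihn m (by omega) R z y v' hR hD hp γ hγ hE

theorem rtg_lb_body {y v : V} (h : Relation.ReflTransGen C.LoopsBack y v) (hne : y ≠ v) :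
    Relation.TransGen C.BStep y v := by
  induction h with
  | refl => exact absurd rfl hne
  | @tail b c hyb hbc ih =>
    by_cases hy : y = b
    · exact hy ▸ hbc.2
    · exact (ih hy).trans hbc.2

/-- Key lemma: a vertex in the loop body of `v` that returns to `v` loops back to `v`. -/
theorem ret (hC : C.IsLLEE) :
    ∀ α n (v z : V), C.Descends v α z → PathN C.AnyStep n z v →
      Relation.ReflTransGen C.LoopsBack z v := by
  intro α
  induction α using Nat.strong_induction_on with
  | _ α ihα =>
    intro n
    induction n using Nat.strong_induction_on with
    | _ n ihn =>
      intro v z hD hP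
      cases hP with
      | refl => exact absurd rfl (descends_ne hD)
      | @step _ y _ n' hstep hrest =>
        rcases anyStep_cases hstep with hb | ⟨δ, he⟩
        · by_cases hyv : y = v
          · exact Relation.ReflTransGen.single ⟨⟨α, hD⟩, .single (hyv ▸ hb)⟩
          · have hyv' := ihn n' (Nat.lt_succ_self n') v y (descends_appendB hD hb hyv) hrest
            exact Relation.ReflTransGen.single
              ⟨⟨α, hD⟩, Relation.TransGen.head hb (rtg_lb_body hyv' hyv)⟩
        · have hδα : δ < α := w2b_lt hC hD (estep_hasEntry he)
          by_cases hyz : y = z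
          · exact ihn n' (Nat.lt_succ_self n') v z hD (hyz ▸ hrest)
          · rcases PathN.split hrest z with hl | ⟨m, hm, hp⟩
            · exact absurd (nopass hC δ n' (fun a b => C.AnyStep a b ∧ b ≠ z) z y v
                (fun p q hpq => hpq) ⟨y, he, hyz, Relation.ReflTransGen.refl⟩ hl α
                (le_of_lt hδα) (descends_hasEntry hD)) (fun f => f)
            · exact ihn m (by omega) v z hD hp

theorem ret' (hC : C.IsLLEE) {α : ℕ} {v z : V} (hD : C.Descends v α z)
    (hr : Relation.ReflTransGen C.AnyStep z v) :
    Relation.ReflTransGen C.LoopsBack z v := by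
  obtain ⟨n, hn⟩ := pathN_of_rtg hr
  exact ret hC α n v z hD hn
theorem bodystep (hC : C.IsLLEE) :
    ∀ n (x x₁ : V), C.BStep x x₁ → PathN C.AnyStep n x₁ x →
      ∃ w, Relation.ReflTransGen C.LoopsBack x w ∧
        Relation.ReflTransGen C.LoopsBack x₁ w := by
  intro n
  induction n using Nat.strong_induction_on with
  | _ n ihn =>
    intro x x₁ hxy hP
    by_cases hx1x : x₁ = x
    · exact ⟨x, Relation.ReflTransGen.refl, hx1x ▸ Relation.ReflTransGen.refl⟩
    obtain ⟨m, w₀, hmn, hP₀, hlast⟩ := PathN.firstHit hP hx1x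
    have hw₀x : w₀ ≠ x := PathN.end_ne hP₀ hx1x
    have toAny : ∀ a b : V, (C.BStep a b ∧ b ≠ x) ∨ ((∃ ε, C.EStep ε a b) ∧ b ≠ x) →
        C.AnyStep a b := by
      rintro a b (⟨hb, -⟩ | ⟨⟨ε, he⟩, -⟩)
      · exact bstep_any hb
      · exact estep_any he
    rcases anyStep_cases hlast with hbl | ⟨γ, hel⟩
    · -- last step of the return path is a body step
      have hP₀' : PathN (fun a b => (C.BStep a b ∧ b ≠ x) ∨
          ((∃ ε, C.EStep ε a b) ∧ b ≠ x)) m x₁ w₀ :=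
        hP₀.mono (fun a b hab => (anyStep_cases hab.1).imp (⟨·, hab.2⟩)
          (fun ⟨ε, he⟩ => ⟨⟨ε, he⟩, hab.2⟩)) 
      rcases PathN.lastE hP₀' with hall | ⟨k, m₂, d, d', hkm, hpre, ⟨⟨δ, hde⟩, hd'x⟩, htail⟩
      · -- no entry at all: body cycle
        have : Relation.TransGen C.BStep x x :=
          Relation.TransGen.trans_right
            (Relation.ReflTransGen.head hxy ((hall.mono (fun a b hab => hab.1)).rtg))
            (Relation.TransGen.single hbl)
        exact absurd this (fun hf => no_bcycle hC hf)
      · have hdx : d ≠ x :=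
          PathN.end_ne (hpre.mono (fun a b hab =>
            ⟨toAny a b hab, hab.elim (fun h => h.2) (fun h => h.2)⟩)) hx1x
        by_cases hdx₁ : d = x₁
        · -- the last-entry source is x₁ itself
          subst hdx₁
          by_cases hd'd : d' = d
          · -- self-entry: body cycle through d = x₁
            subst hd'd
            have : Relation.TransGen C.BStep d' d' :=
              Relation.TransGen.trans_right
                ((htail.mono (fun a b hab => hab.1)).rtg)
                (Relation.TransGen.tail (Relation.TransGen.single hbl) hxy)
            exact absurd this (fun hf => no_bcycle hC hf)
          · rcases PathN.split htail d with hl | ⟨m', hm', hp⟩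
            · -- tail avoids d = x₁ : Descends x₁ δ x, then x ⇢* x₁
              have hw₀d : w₀ ≠ d := PathN.end_ne
                (hl.mono (fun a b hab => ⟨hab.1.1, hab.2⟩)) hd'd
              have hDx : C.Descends d δ x :=
                ⟨d', hde, hd'd, Relation.ReflTransGen.tail
                  ((hl.mono (fun a b hab => ⟨hab.1.1, hab.2⟩)).rtg)
                  ⟨hbl, Ne.symm hdx⟩⟩
              have hret : Relation.ReflTransGen C.LoopsBack x d :=
                ret' hC hDx (Relation.ReflTransGen.single (bstep_any hxy))
              exact ⟨d, hret, Relation.ReflTransGen.refl⟩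
            · -- d = x₁ occurs inside the body tail: body cycle
              have : Relation.TransGen C.BStep d d :=
                Relation.TransGen.trans_right
                  ((hp.mono (fun a b hab => hab.1)).rtg)
                  (Relation.TransGen.tail (Relation.TransGen.single hbl) hxy)
              exact absurd this (fun hf => no_bcycle hC hf)
        · -- d ∉ {x, x₁}
          by_cases hw₀d : w₀ = d
          · -- recurse on the shorter cycle through d
            subst hw₀d
            have hnew : PathN C.AnyStep (k + 1) x₁ x :=
              (hpre.mono toAny).concat (PathN.step (bstep_any hbl) (PathN.refl x))
            exact ihn (k + 1) (by omega) x x₁ hxy hnew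
          · rcases PathN.avoidLast htail d hw₀d with ⟨m₂', hle, hAv⟩ | ⟨m₂', hlt, hAv⟩
            · by_cases hd'd : d' = d
              · -- self entry at d: recurse on shorter cycle
                subst hd'd
                have hnew : PathN C.AnyStep (k + (m₂' + 1)) x₁ x :=
                  (hpre.mono toAny).concat
                    ((hAv.mono (fun a b hab => bstep_any hab.1.1)).concat
                      (PathN.step (bstep_any hbl) (PathN.refl x)))
                exact ihn (k + (m₂' + 1)) (by omega) x x₁ hxy hnew
              · -- winning case: w := d
                have hDx : C.Descends d δ x :=
                  ⟨d', hde, hd'd, Relation.ReflTransGen.tail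
                    ((hAv.mono (fun a b hab => ⟨hab.1.1, hab.2⟩)).rtg)
                    ⟨hbl, Ne.symm hdx⟩⟩
                have hDx₁ : C.Descends d δ x₁ :=
                  descends_appendB hDx hxy (Ne.symm hdx₁)
                have hretx : Relation.ReflTransGen C.LoopsBack x d :=
                  ret' hC hDx (Relation.ReflTransGen.head (bstep_any hxy)
                    ((hpre.mono toAny).rtg))
                have hretx₁ : Relation.ReflTransGen C.LoopsBack x₁ d :=
                  ret' hC hDx₁ ((hpre.mono toAny).rtg)
                exact ⟨d, hretx, hretx₁⟩
            · -- last occurrence of d inside the tail: recurse on shorter cycle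
              have hnew : PathN C.AnyStep (k + (m₂' + 1)) x₁ x :=
                (hpre.mono toAny).concat
                  ((hAv.mono (fun a b hab => bstep_any hab.1.1)).concat
                    (PathN.step (bstep_any hbl) (PathN.refl x)))
              exact ihn (k + (m₂' + 1)) (by omega) x x₁ hxy hnew
    · -- last step of the return path is an entry step: w := w₀
      have hDx : C.Descends w₀ γ x := ⟨x, hel, Ne.symm hw₀x, Relation.ReflTransGen.refl⟩
      have h1 : Relation.ReflTransGen C.LoopsBack x w₀ :=
        ret' hC hDx (Relation.ReflTransGen.head (bstep_any hxy)
          ((hP₀.mono (fun a b hab => hab.1)).rtg))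
      by_cases h2 : x₁ = w₀
      · exact ⟨w₀, h1, h2 ▸ Relation.ReflTransGen.refl⟩
      · have hDx₁ : C.Descends w₀ γ x₁ := descends_appendB hDx hxy h2
        have h3 : Relation.ReflTransGen C.LoopsBack x₁ w₀ :=
          ret' hC hDx₁ ((hP₀.mono (fun a b hab => hab.1)).rtg)
        exact ⟨w₀, h1, h3⟩
theorem rtg_split {r : V → V → Prop} {u a : V} (h : Relation.ReflTransGen r u a) (b : V) :
    Relation.ReflTransGen (fun p q => r p q ∧ q ≠ b) u a ∨ Relation.ReflTransGen r b a := by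
  induction h using Relation.ReflTransGen.head_induction_on with
  | refl => exact Or.inl Relation.ReflTransGen.refl
  | @head p p' hstep hrest ih =>
    by_cases hp' : p' = b
    · exact Or.inr (hp' ▸ hrest)
    · rcases ih with hl | hr
      · exact Or.inl (Relation.ReflTransGen.head ⟨hstep, hp'⟩ hl)
      · exact Or.inr hr

theorem rtg_ne_transGen {r : V → V → Prop} {a b : V} (h : Relation.ReflTransGen r a b)
    (hne : a ≠ b) : Relation.TransGen r a b := by
  rcases Relation.ReflTransGen.cases_head h with rfl | ⟨c, h1, h2⟩
  · exact absurd rfl hne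
  · exact Relation.TransGen.head' h1 h2

/-- Comparability of loop-back targets. -/
theorem comp (hC : C.IsLLEE) {u a b : V} (ha : C.LoopsBack u a) (hb : C.LoopsBack u b) :
    a = b ∨ C.LoopsBack a b ∨ C.LoopsBack b a := by
  by_cases hab : a = b
  · exact Or.inl hab
  by_cases hua : u = a
  · exact Or.inr (Or.inl (hua ▸ hb))
  by_cases hub : u = b
  · exact Or.inr (Or.inr (hub ▸ ha))
  obtain ⟨⟨α, ua₀, heα, hua₀, hpa⟩, hta⟩ := ha
  obtain ⟨⟨β, ub₀, heβ, hub₀, hpb⟩, htb⟩ := hb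
  rcases rtg_split hta.to_reflTransGen b with hA1 | hA1 <;>
    rcases rtg_split htb.to_reflTransGen a with hA2 | hA2
  · -- both avoid: contradiction via w2b in both directions
    have hDab : C.Descends a α b := ⟨ua₀, heα, hua₀, hpa.trans hA2⟩
    have hDba : C.Descends b β a := ⟨ub₀, heβ, hub₀, hpb.trans hA1⟩
    have h1 : β < α := w2b_lt hC hDab (estep_hasEntry heβ)
    have h2 : α < β := w2b_lt hC hDba (estep_hasEntry heα)
    omega
  · -- path u →bo* b passes through a : a ⇢ b
    have hDba : C.Descends b β a := ⟨ub₀, heβ, hub₀, hpb.trans hA1⟩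
    exact Or.inr (Or.inl ⟨⟨β, hDba⟩, rtg_ne_transGen hA2 hab⟩)
  · -- path u →bo* a passes through b : b ⇢ a
    have hDab : C.Descends a α b := ⟨ua₀, heα, hua₀, hpa.trans hA2⟩
    exact Or.inr (Or.inr ⟨⟨α, hDab⟩, rtg_ne_transGen hA1 (Ne.symm hab)⟩)
  · -- both pass through each other : body cycle
    exact absurd (Relation.TransGen.trans_right hA1 (rtg_ne_transGen hA2 hab))
      (fun hf => no_bcycle hC hf)

/-- Along a loops-back step, the available entry levels strictly increase. -/
theorem lb_incr (hC : C.IsLLEE) {p q : V} (h : C.LoopsBack p q) {γ : ℕ}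
    (he : C.HasEntry p γ) : ∃ α, γ < α ∧ C.HasEntry q α := by
  obtain ⟨⟨α, hD⟩, -⟩ := h
  exact ⟨α, w2b_lt hC hD he, descends_hasEntry hD⟩

theorem lb_incr_trans (hC : C.IsLLEE) {p q : V} (h : Relation.TransGen C.LoopsBack p q) :
    ∀ γ, C.HasEntry p γ → ∃ α, γ < α ∧ C.HasEntry q α := by
  induction h with
  | single h1 => exact fun γ hγ => lb_incr hC h1 hγ
  | tail h1 h2 ih =>
    intro γ hγ
    obtain ⟨α, hα1, hα2⟩ := ih γ hγ
    obtain ⟨α', hα'1, hα'2⟩ := lb_incr hC h2 hα2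
    exact ⟨α', by omega, hα'2⟩

theorem lb_irrefl (hC : C.IsLLEE) (p : V) : ¬ Relation.TransGen C.LoopsBack p p := by
  intro h
  obtain ⟨x, hx1, hx2⟩ := Relation.TransGen.tail'_iff.mp h
  obtain ⟨⟨β, hDβ⟩, -⟩ := hx2
  have hEp : C.HasEntry p β := descends_hasEntry hDβ
  obtain ⟨w₁, hw₁, -⟩ := Relation.TransGen.head'_iff.mp h
  obtain ⟨⟨α₁, hDα₁⟩, -⟩ := hw₁
  -- entries of p are bounded by α₁
  have hbdd : BddAbove {γ | C.HasEntry p γ} :=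
    ⟨α₁, fun γ hγ => le_of_lt (w2b_lt hC hDα₁ hγ)⟩
  have hne : {γ | C.HasEntry p γ}.Nonempty := ⟨β, hEp⟩
  have hmem := Nat.sSup_mem hne hbdd
  obtain ⟨α, hα1, hα2⟩ := lb_incr_trans hC h _ hmem
  exact absurd (le_csSup hbdd hα2) (by omega)

theorem lb_wf [Finite V] (hC : C.IsLLEE) :
    WellFounded (fun a b : V => C.LoopsBack b a) := by
  have h1 : IsTrans V (Relation.TransGen fun a b : V => C.LoopsBack b a) :=
    ⟨fun a b c h1 h2 => h1.trans h2⟩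
  have h2 : IsIrrefl V (Relation.TransGen fun a b : V => C.LoopsBack b a) := by
    constructor
    intro a ha
    exact lb_irrefl hC a (Relation.transGen_swap.mp ha)
  have := Finite.wellFounded_of_trans_of_irrefl
    (Relation.TransGen fun a b : V => C.LoopsBack b a)
  exact Subrelation.wf (r := Relation.TransGen fun a b : V => C.LoopsBack b a)
    (fun {a b} hab => Relation.TransGen.single hab) this

theorem join [Finite V] (hC : C.IsLLEE) :
    ∀ x w₁ w₂ : V, Relation.ReflTransGen C.LoopsBack x w₁ →
      Relation.ReflTransGen C.LoopsBack x w₂ →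
      ∃ w, Relation.ReflTransGen C.LoopsBack w₁ w ∧
        Relation.ReflTransGen C.LoopsBack w₂ w := by
  intro x
  induction x using (lb_wf hC).induction with
  | _ x ih =>
    intro w₁ w₂ h1 h2
    rcases Relation.ReflTransGen.cases_head h1 with rfl | ⟨a, ha1, ha2⟩
    · exact ⟨w₂, h2, Relation.ReflTransGen.refl⟩
    rcases Relation.ReflTransGen.cases_head h2 with rfl | ⟨b, hb1, hb2⟩
    · exact ⟨w₁, Relation.ReflTransGen.refl, h1⟩
    rcases comp hC ha1 hb1 with rfl | hlb | hlb
    · exact ih a ha1 w₁ w₂ ha2 hb2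
    · exact ih a ha1 w₁ w₂ ha2 (Relation.ReflTransGen.head hlb hb2)
    · exact ih b hb1 w₁ w₂ (Relation.ReflTransGen.head hlb ha2) hb2

theorem fwd [Finite V] (hC : C.IsLLEE) :
    ∀ n (u v : V), PathN C.AnyStep n u v → Relation.ReflTransGen C.AnyStep v u →
      ∃ w, Relation.ReflTransGen C.LoopsBack u w ∧
        Relation.ReflTransGen C.LoopsBack v w := by
  intro n
  induction n using Nat.strong_induction_on with
  | _ n ihn =>
    intro u v hP hvu
    cases hP with
    | refl => exact ⟨u, Relation.ReflTransGen.refl, Relation.ReflTransGen.refl⟩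
    | @step _ x₁ _ n' hstep hrest =>
      have hx₁u : Relation.ReflTransGen C.AnyStep x₁ u := hrest.rtg.trans hvu
      have hvx₁ : Relation.ReflTransGen C.AnyStep v x₁ :=
        (hvu.tail hstep).trans (Relation.ReflTransGen.refl)
      -- common loops-back target for u and x₁
      have hcommon : ∃ w₂, Relation.ReflTransGen C.LoopsBack u w₂ ∧
          Relation.ReflTransGen C.LoopsBack x₁ w₂ := by
        by_cases hx₁u' : x₁ = u
        · exact ⟨u, Relation.ReflTransGen.refl, hx₁u' ▸ Relation.ReflTransGen.refl⟩
        rcases anyStep_cases hstep with hb | ⟨δ, he⟩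
        · obtain ⟨m, hm⟩ := pathN_of_rtg hx₁u
          exact bodystep hC m u x₁ hb hm
        · have hD : C.Descends u δ x₁ := ⟨x₁, he, hx₁u', Relation.ReflTransGen.refl⟩
          exact ⟨u, Relation.ReflTransGen.refl, ret' hC hD hx₁u⟩
      obtain ⟨w₂, hw₂u, hw₂x₁⟩ := hcommon
      obtain ⟨w₁, hw₁x₁, hw₁v⟩ := ihn n' (Nat.lt_succ_self n') x₁ v hrest
        (hvu.tail hstep)
      obtain ⟨w₃, hw₃1, hw₃2⟩ := join hC x₁ w₂ w₁ hw₂x₁ hw₁x₁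
      exact ⟨w₃, hw₂u.trans hw₃1, hw₁v.trans hw₃2⟩

theorem lb_sameSCC {p q : V} (h : C.LoopsBack p q) : C.SameSCC p q := by
  obtain ⟨⟨α, hD⟩, ht⟩ := h
  exact ⟨Relation.ReflTransGen.mono (fun a b hab => bstep_any hab) _ _ (ht.to_reflTransGen),
    descends_rtgAny hD⟩

theorem sameSCC_refl (p : V) : C.SameSCC p p :=
  ⟨Relation.ReflTransGen.refl, Relation.ReflTransGen.refl⟩

theorem sameSCC_trans {p q r : V} (h1 : C.SameSCC p q) (h2 : C.SameSCC q r) :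
    C.SameSCC p r := ⟨h1.1.trans h2.1, h2.2.trans h1.2⟩

theorem rtg_lb_sameSCC {p q : V} (h : Relation.ReflTransGen C.LoopsBack p q) :
    C.SameSCC p q := by
  induction h with
  | refl => exact sameSCC_refl p
  | tail h1 h2 ih => exact sameSCC_trans ih (lb_sameSCC h2)
end LChartAux


/-- Two vertices `u` and `v` are in the same strongly connected component if and
only if there exists a vertex `w` such that `u ⇢* w` and `v ⇢* w`. -/
theorem sameSCC_iff_common_loopsBack {V A : Type} [Finite V] (C : LChart V A)
    (h : C.IsLLEE) (u v : V) :
    C.SameSCC u v ↔ ∃ w : V, Relation.ReflTransGen C.LoopsBack u w ∧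
      Relation.ReflTransGen C.LoopsBack v w := by
  constructor
  · rintro ⟨huv, hvu⟩
    obtain ⟨n, hn⟩ := LChartAux.pathN_of_rtg huv
    exact LChartAux.fwd h n u v hn hvu
  · rintro ⟨w, hu, hv⟩
    exact LChartAux.sameSCC_trans (LChartAux.rtg_lb_sameSCC hu)
      ⟨(LChartAux.rtg_lb_sameSCC hv).2, (LChartAux.rtg_lb_sameSCC hv).1⟩
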